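/- For all real a > 0, Γ(a, a)/Γ(a) < 1/2, i.e., P(X_a > a) < 1/2 where X_a has the gamma distribution with shape a and scale 1. -/

import Mathlib

open Real MeasureTheory Set Filter

noncomputable def uIG (a x : ℝ) : ℝ := ∫ t in Set.Ioi x, t ^ (a - 1) * Real.exp (-t)

lemma phi_neg {a τ : ℝ} (ha : 0 < a) (h0 : 0 < τ) (h1 : τ < a) :
    2*a*(Real.log a - Real.log τ) + τ - a^2/τ < 0 := by
  set φ : ℝ → ℝ := fun x => 2*a*(Real.log a - Real.log x) + x - a^2/x with hφ
  have key : StrictMonoOn φ (Set.Ioc 0 a) := by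
    apply strictMonoOn_of_deriv_pos (convex_Ioc 0 a)
    · intro x hx
      have hx0 : (0:ℝ) < x := hx.1
      have hc : ContinuousAt φ x := by
        have h1 : ContinuousAt (fun y : ℝ => Real.log y) x :=
          Real.continuousAt_log (ne_of_gt hx0)
        exact (((continuousAt_const.sub h1).const_mul (2*a)).add continuousAt_id).sub
          (continuousAt_const.div continuousAt_id (ne_of_gt hx0))
      exact hc.continuousWithinAt
    · intro x hx
      rw [interior_Ioc] at hx
      have hx0 : 0 < x := hx.1
      have hder : HasDerivAt φ (2*a*(0 - 1/x) + 1 - (-(a^2) / x^2)) x := by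
        have h1 : HasDerivAt (fun y : ℝ => Real.log y) (1/x) x := by
          simpa [one_div] using Real.hasDerivAt_log (ne_of_gt hx0)
        have h2 : HasDerivAt (fun y : ℝ => a^2 / y) (-(a^2) / x^2) x := by
          have := (hasDerivAt_inv (ne_of_gt hx0)).const_mul (a^2)
          simp only [div_eq_mul_inv]
          rw [show -(a^2) * (x^2)⁻¹ = a^2 * -(x^2)⁻¹ by ring]
          exact this
        exact ((((hasDerivAt_const x (Real.log a)).sub h1).const_mul (2*a)).add
          (hasDerivAt_id x)).sub h2
      rw [hder.deriv]
      have hxa : x ≠ a := ne_of_lt hx.2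
      have h : 2*a*(0 - 1/x) + 1 - (-(a^2) / x^2) = (x - a)^2 / x^2 := by
        field_simp; ring
      rw [h]
      have h2 : (0:ℝ) < (x - a)^2 := by
        have := sub_ne_zero.mpr hxa
        positivity
      exact div_pos h2 (by positivity)
  have h := key ⟨h0, h1.le⟩ ⟨ha, le_rfl⟩ h1
  have hφa : φ a = 0 := by
    simp only [hφ]
    field_simp
    ring
  rw [hφa] at h
  simpa [hφ] using h

theorem stmt3 (a : ℝ) (ha : 0 < a) : uIG a a / Real.Gamma a < 1/2 := by
  set f : ℝ → ℝ := fun t => t ^ (a - 1) * Real.exp (-t) with hfdef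
  have hint : IntegrableOn f (Ioi 0) := by
    have h := Real.GammaIntegral_convergent ha
    exact h.congr_fun (fun x hx => mul_comm _ _) measurableSet_Ioi
  have hI2int : IntegrableOn f (Ioi a) := hint.mono_set (Ioi_subset_Ioi ha.le)
  have hI1int : IntegrableOn f (Ioc 0 a) := hint.mono_set Ioc_subset_Ioi_self
  have hGamma : Real.Gamma a = (∫ t in Ioc 0 a, f t) + (∫ t in Ioi a, f t) := by
    rw [Real.Gamma_eq_integral ha]
    have h1 : (∫ x in Ioi (0:ℝ), Real.exp (-x) * x ^ (a-1)) = ∫ x in Ioi (0:ℝ), f x := by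
      apply setIntegral_congr_fun measurableSet_Ioi
      intro x hx; simp [hfdef, mul_comm]
    rw [h1, ← Set.Ioc_union_Ioi_eq_Ioi ha.le,
      setIntegral_union (Set.Ioc_disjoint_Ioi le_rfl) measurableSet_Ioi hI1int hI2int]
  -- substitution t = a^2 * τ⁻¹ mapping Ioo 0 a onto Ioi a
  set F : ℝ → ℝ := fun τ => a^2 * τ⁻¹ with hFdef
  have himg : F '' Ioo 0 a = Ioi a := by
    ext t
    constructor
    · rintro ⟨τ, ⟨h0, h1⟩, rfl⟩
      have : a < a^2 * τ⁻¹ := by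
        rw [← div_eq_mul_inv, lt_div_iff₀ h0]; nlinarith
      simpa [hFdef] using this
    · intro ht
      have ht' : a < t := ht
      have ht0 : 0 < t := lt_trans ha ht'
      refine ⟨a^2 * t⁻¹, ⟨by positivity, ?_⟩, ?_⟩
      · rw [← div_eq_mul_inv, div_lt_iff₀ ht0]; nlinarith
      · simp only [hFdef]; field_simp
  have hFderiv : ∀ τ ∈ Ioo (0:ℝ) a, HasDerivWithinAt F (-(a^2) * (τ^2)⁻¹) (Ioo 0 a) τ := by
    intro τ hτ
    have hd : HasDerivAt F (a^2 * (-(τ^2)⁻¹)) τ :=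
      (hasDerivAt_inv (ne_of_gt hτ.1)).const_mul (a^2)
    rw [show a^2 * (-(τ^2)⁻¹) = -(a^2) * (τ^2)⁻¹ from by ring] at hd
    exact hd.hasDerivWithinAt
  have hFinj : InjOn F (Ioo 0 a) := by
    intro x hx y hy h
    have hx0 := hx.1; have hy0 := hy.1
    simp only [hFdef] at h
    field_simp at h
    exact h.symm
  have hsub : (∫ t in Ioi a, f t) = ∫ τ in Ioo 0 a, |(-(a^2) * (τ^2)⁻¹)| • f (F τ) := by
    rw [← himg]
    exact integral_image_eq_integral_abs_deriv_smul measurableSet_Ioo hFderiv hFinj f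
  have hg1int : IntegrableOn (fun τ => |(-(a^2) * (τ^2)⁻¹)| • f (F τ)) (Ioo 0 a) := by
    rw [← integrableOn_image_iff_integrableOn_abs_deriv_smul measurableSet_Ioo hFderiv hFinj f,
      himg]
    exact hI2int
  have hg2int : IntegrableOn f (Ioo 0 a) := hint.mono_set (fun x hx => hx.1)
  -- pointwise strict inequality on Ioo 0 a
  have hpt : ∀ τ ∈ Ioo (0:ℝ) a, |(-(a^2) * (τ^2)⁻¹)| • f (F τ) < f τ := by
    intro τ hτ
    have h0 : 0 < τ := hτ.1
    have h1 : τ < a := hτ.2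
    have hb : 0 < a^2 * τ⁻¹ := by positivity
    have habs : |(-(a^2) * (τ^2)⁻¹)| = Real.exp (2*Real.log a - 2*Real.log τ) := by
      rw [abs_of_nonpos (by
        have : (0:ℝ) < a^2 * (τ^2)⁻¹ := by positivity
        linarith)]
      have ea : Real.exp (2*Real.log a) = a^2 := by
        rw [two_mul, Real.exp_add, Real.exp_log ha]; ring
      have eτ : Real.exp (2*Real.log τ) = τ^2 := by
        rw [two_mul, Real.exp_add, Real.exp_log h0]; ring
      rw [Real.exp_sub, ea, eτ]
      field_simp
    have hlogb : Real.log (a^2 * τ⁻¹) = 2*Real.log a - Real.log τ := by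
      rw [Real.log_mul (by positivity) (by positivity), Real.log_pow, Real.log_inv]
      push_cast; ring
    simp only [hfdef, hFdef, smul_eq_mul]
    rw [Real.rpow_def_of_pos hb, Real.rpow_def_of_pos h0, habs, hlogb,
      ← Real.exp_add, ← Real.exp_add, ← Real.exp_add]
    rw [Real.exp_lt_exp]
    have hφ := phi_neg ha h0 h1
    rw [div_eq_mul_inv] at hφ
    nlinarith [hφ]
  -- strict integral inequality
  have hlt : (∫ τ in Ioo 0 a, |(-(a^2) * (τ^2)⁻¹)| • f (F τ)) < ∫ τ in Ioo 0 a, f τ := by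
    have hdiff : 0 < ∫ τ in Ioo 0 a, (f τ - |(-(a^2) * (τ^2)⁻¹)| • f (F τ)) := by
      rw [setIntegral_pos_iff_support_of_nonneg_ae]
      · have hsup : Ioo 0 a ⊆ Function.support
            (fun τ => f τ - |(-(a^2) * (τ^2)⁻¹)| • f (F τ)) := by
          intro τ hτ
          exact ne_of_gt (sub_pos.mpr (hpt τ hτ))
        have : Ioo 0 a ⊆ Function.support
            (fun τ => f τ - |(-(a^2) * (τ^2)⁻¹)| • f (F τ)) ∩ Ioo 0 a :=
          fun x hx => ⟨hsup hx, hx⟩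
        calc (0:ENNReal) < ENNReal.ofReal (a - 0) := by simpa using ha
          _ = volume (Ioo (0:ℝ) a) := (Real.volume_Ioo).symm
          _ ≤ _ := measure_mono this
      · filter_upwards [ae_restrict_mem measurableSet_Ioo] with τ hτ
        exact sub_nonneg.mpr (hpt τ hτ).le
      · exact hg2int.sub hg1int
    have heq := integral_sub hg2int hg1int
    rw [heq] at hdiff
    linarith
  have hIoo : (∫ t in Ioc 0 a, f t) = ∫ t in Ioo 0 a, f t :=
    (setIntegral_congr_set Ioo_ae_eq_Ioc).symm
  have huIG : uIG a a = ∫ t in Ioi a, f t := rfl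
  have hmain : (∫ t in Ioi a, f t) < ∫ t in Ioc 0 a, f t := by
    rw [hsub, hIoo]; exact hlt
  rw [huIG, div_lt_iff₀ (Real.Gamma_pos_of_pos ha)]
  linarith [hGamma, hmain]
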